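/- Let X be a countable set, P a Markov kernel on X, r : X → ℝ bounded, θ > 0, Λ ∈ ℝ, and f : X → (0, ∞) bounded and bounded below away from 0, satisfying the multiplicative Poisson equation ∑_j e^{θ r(k)} f(j) P(j|k) = e^{θΛ} f(k) for all k. Then for every starting state k, limsup_{T→∞} (1/(θT)) log E_k[ exp(θ ∑_{t=0}^{T−1} r(X_t)) ] = Λ. -/

import Mathlib

open MeasureTheory Real Filter
open scoped ENNReal Topology

lemma integral_path_eq_tsum' {Ω X : Type*} [MeasurableSpace Ω]
    [MeasurableSpace X] [MeasurableSingletonClass X] [Countable X]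
    (μ : Measure Ω) [IsProbabilityMeasure μ]
    (Xp : ℕ → Ω → X) (hXmeas : ∀ t, Measurable (Xp t))
    (n : ℕ) (G : (Fin n → X) → ℝ) (K : ℝ) (hK : ∀ p, |G p| ≤ K) :
    ∫ ω, G (fun i => Xp i ω) ∂μ =
      ∑' p : Fin n → X, (μ {ω | ∀ i : Fin n, Xp i ω = p i}).toReal * G p := by
  have hm : Measurable (fun ω (i : Fin n) => Xp i ω) :=
    measurable_pi_lambda _ fun i => hXmeas i
  have hGmeas : Measurable G := measurable_of_countable G
  haveI : IsProbabilityMeasure (μ.map (fun ω (i : Fin n) => Xp i ω)) :=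
    Measure.isProbabilityMeasure_map hm.aemeasurable
  have hint : Integrable G (μ.map (fun ω (i : Fin n) => Xp i ω)) :=
    (integrable_const K).mono' hGmeas.aestronglyMeasurable
      (Filter.Eventually.of_forall fun p => by simpa using hK p)
  rw [← integral_map hm.aemeasurable hGmeas.aestronglyMeasurable,
    integral_countable' hint]
  refine tsum_congr fun p => ?_
  rw [measureReal_def, Measure.map_apply hm (measurableSet_singleton p), smul_eq_mul]
  have hs : (fun ω (i : Fin n) => Xp i ω) ⁻¹' {p} = {ω | ∀ i : Fin n, Xp i ω = p i} := by
    ext ω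
    simp [Set.mem_preimage, funext_iff]
  rw [hs]


lemma key_hasSum' {Ω X : Type*} [MeasurableSpace Ω]
    [MeasurableSpace X] [MeasurableSingletonClass X] [Countable X]
    (μ : Measure Ω) [IsProbabilityMeasure μ]
    (P : X → X → ℝ) (hP : ∀ i, (∀ j, 0 ≤ P i j) ∧ HasSum (P i) 1)
    (r : X → ℝ) (θ : ℝ) (Λ : ℝ)
    (f : X → ℝ) (hfpos : ∀ k, 0 < f k)
    (heq : ∀ k, HasSum (fun j => Real.exp (θ * r k) * f j * P k j)
      (Real.exp (θ * Λ) * f k))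
    (Xp : ℕ → Ω → X) (k : X) (hstart : ∀ ω, Xp 0 ω = k)
    (hchain : ∀ (t : ℕ) (path : Fin (t + 1) → X) (y : X),
      (μ {ω | (∀ i : Fin (t + 1), Xp i ω = path i) ∧ Xp (t + 1) ω = y}).toReal =
        (μ {ω | ∀ i : Fin (t + 1), Xp i ω = path i}).toReal * P (path (Fin.last t)) y)
    (T : ℕ) :
    HasSum (fun p : Fin (T + 1) → X =>
      (μ {ω | ∀ i : Fin (T + 1), Xp i ω = p i}).toReal *
        (Real.exp (θ * ∑ i : Fin T, r (p i.castSucc)) * f (p (Fin.last T))))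
      (Real.exp (θ * Λ * T) * f k) := by
  induction T with
  | zero =>
    have h := hasSum_single (f := fun p : Fin (0 + 1) → X =>
      (μ {ω | ∀ i : Fin (0 + 1), Xp i ω = p i}).toReal *
        (Real.exp (θ * ∑ i : Fin 0, r (p i.castSucc)) * f (p (Fin.last 0))))
      (fun _ : Fin (0 + 1) => k) ?_
    · convert h using 1
      have hset : {ω : Ω | ∀ i : Fin (0 + 1), Xp i ω = (fun _ : Fin (0+1) => k) i}
          = Set.univ := by
        ext ω
        simp only [Set.mem_setOf_eq, Set.mem_univ, iff_true]
        intro i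
        have hi : (i : ℕ) = 0 := by omega
        rw [hi]
        exact hstart ω
      rw [hset]
      simp
    · intro p hp
      have hset : {ω : Ω | ∀ i : Fin (0 + 1), Xp i ω = p i} = ∅ := by
        ext ω
        simp only [Set.mem_setOf_eq, Set.mem_empty_iff_false, iff_false]
        intro hω
        apply hp
        funext i
        rw [← hω i]
        have hi : (i : ℕ) = 0 := by omega
        rw [hi]
        exact (hstart ω).symm ▸ (hstart ω)
      simp only [hset]
      simp
  | succ T ih =>
    -- measure recursion on cylinders
    have hA : ∀ (p : Fin (T + 1) → X) (y : X),
        (μ {ω | ∀ i : Fin (T + 1 + 1), Xp i ω = (Fin.snoc p y : Fin (T+1+1) → X) i}).toReal =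
          (μ {ω | ∀ i : Fin (T + 1), Xp i ω = p i}).toReal * P (p (Fin.last T)) y := by
      intro p y
      have hset : {ω : Ω | ∀ i : Fin (T + 1 + 1), Xp i ω = (Fin.snoc p y : Fin (T+1+1) → X) i} =
          {ω | (∀ i : Fin (T + 1), Xp i ω = p i) ∧ Xp (T + 1) ω = y} := by
        ext ω
        simp only [Set.mem_setOf_eq]
        constructor
        · intro h
          refine ⟨fun i => ?_, ?_⟩
          · have h2 := h i.castSucc
            rwa [Fin.snoc_castSucc, Fin.coe_castSucc] at h2
          · have h2 := h (Fin.last (T + 1))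
            rwa [Fin.snoc_last, Fin.val_last] at h2
        · rintro ⟨h1, h2⟩ i
          induction i using Fin.lastCases with
          | last => rw [Fin.snoc_last, Fin.val_last]; exact h2
          | cast i => rw [Fin.snoc_castSucc, Fin.coe_castSucc]; exact h1 i
      rw [hset]
      exact hchain T p y
    -- fiberwise sums
    have hfiber : ∀ p : Fin (T + 1) → X,
        HasSum (fun y : X =>
          (μ {ω | ∀ i : Fin (T + 1), Xp i ω = p i}).toReal * P (p (Fin.last T)) y *
            (Real.exp (θ * (∑ i : Fin T, r (p i.castSucc) + r (p (Fin.last T)))) * f y))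
          (Real.exp (θ * Λ) *
            ((μ {ω | ∀ i : Fin (T + 1), Xp i ω = p i}).toReal *
              (Real.exp (θ * ∑ i : Fin T, r (p i.castSucc)) * f (p (Fin.last T))))) := by
      intro p
      have hs := (heq (p (Fin.last T))).mul_left
        ((μ {ω | ∀ i : Fin (T + 1), Xp i ω = p i}).toReal *
          Real.exp (θ * ∑ i : Fin T, r (p i.castSucc)))
      have hfun : (fun y : X =>
          (μ {ω | ∀ i : Fin (T + 1), Xp i ω = p i}).toReal * P (p (Fin.last T)) y *
            (Real.exp (θ * (∑ i : Fin T, r (p i.castSucc) + r (p (Fin.last T)))) * f y)) =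
          (fun j : X =>
            ((μ {ω | ∀ i : Fin (T + 1), Xp i ω = p i}).toReal *
              Real.exp (θ * ∑ i : Fin T, r (p i.castSucc))) *
            (Real.exp (θ * r (p (Fin.last T))) * f j * P (p (Fin.last T)) j)) := by
        funext y
        rw [mul_add, Real.exp_add]
        ring
      have hval : Real.exp (θ * Λ) *
            ((μ {ω | ∀ i : Fin (T + 1), Xp i ω = p i}).toReal *
              (Real.exp (θ * ∑ i : Fin T, r (p i.castSucc)) * f (p (Fin.last T)))) =
          ((μ {ω | ∀ i : Fin (T + 1), Xp i ω = p i}).toReal *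
            Real.exp (θ * ∑ i : Fin T, r (p i.castSucc))) *
          (Real.exp (θ * Λ) * f (p (Fin.last T))) := by ring
      rw [hfun, hval]
      exact hs
    -- summability on the product
    have hnonneg : (0 : ((Fin (T + 1) → X) × X) → ℝ) ≤ fun q =>
        (μ {ω | ∀ i : Fin (T + 1), Xp i ω = q.1 i}).toReal * P (q.1 (Fin.last T)) q.2 *
          (Real.exp (θ * (∑ i : Fin T, r (q.1 i.castSucc) + r (q.1 (Fin.last T)))) * f q.2) :=
      fun q => mul_nonneg (mul_nonneg ENNReal.toReal_nonneg ((hP _).1 _))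
        (mul_nonneg (Real.exp_pos _).le (hfpos _).le)
    have hsumF : Summable (fun q : (Fin (T + 1) → X) × X =>
        (μ {ω | ∀ i : Fin (T + 1), Xp i ω = q.1 i}).toReal * P (q.1 (Fin.last T)) q.2 *
          (Real.exp (θ * (∑ i : Fin T, r (q.1 i.castSucc) + r (q.1 (Fin.last T)))) * f q.2)) := by
      refine (summable_prod_of_nonneg hnonneg).2 ⟨fun p => (hfiber p).summable, ?_⟩
      have h1 : (fun p : Fin (T + 1) → X => ∑' y : X,
          (μ {ω | ∀ i : Fin (T + 1), Xp i ω = p i}).toReal * P (p (Fin.last T)) y *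
            (Real.exp (θ * (∑ i : Fin T, r (p i.castSucc) + r (p (Fin.last T)))) * f y)) =
          fun p : Fin (T + 1) → X => Real.exp (θ * Λ) *
            ((μ {ω | ∀ i : Fin (T + 1), Xp i ω = p i}).toReal *
              (Real.exp (θ * ∑ i : Fin T, r (p i.castSucc)) * f (p (Fin.last T)))) :=
        funext fun p => (hfiber p).tsum_eq
      rw [h1]
      exact ih.summable.mul_left _
    have htsum : (∑' q : (Fin (T + 1) → X) × X,
        (μ {ω | ∀ i : Fin (T + 1), Xp i ω = q.1 i}).toReal * P (q.1 (Fin.last T)) q.2 *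
          (Real.exp (θ * (∑ i : Fin T, r (q.1 i.castSucc) + r (q.1 (Fin.last T)))) * f q.2))
        = Real.exp (θ * Λ * (T + 1 : ℕ)) * f k := by
      rw [Summable.tsum_prod' hsumF fun p => (hfiber p).summable]
      calc (∑' (p : Fin (T + 1) → X) (y : X),
            (μ {ω | ∀ i : Fin (T + 1), Xp i ω = p i}).toReal * P (p (Fin.last T)) y *
              (Real.exp (θ * (∑ i : Fin T, r (p i.castSucc) + r (p (Fin.last T)))) * f y))
          = ∑' p : Fin (T + 1) → X, Real.exp (θ * Λ) *
              ((μ {ω | ∀ i : Fin (T + 1), Xp i ω = p i}).toReal *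
                (Real.exp (θ * ∑ i : Fin T, r (p i.castSucc)) * f (p (Fin.last T)))) :=
            tsum_congr fun p => (hfiber p).tsum_eq
        _ = Real.exp (θ * Λ) * ∑' p : Fin (T + 1) → X,
              ((μ {ω | ∀ i : Fin (T + 1), Xp i ω = p i}).toReal *
                (Real.exp (θ * ∑ i : Fin T, r (p i.castSucc)) * f (p (Fin.last T)))) :=
            tsum_mul_left
        _ = Real.exp (θ * Λ) * (Real.exp (θ * Λ * T) * f k) := by rw [ih.tsum_eq]
        _ = Real.exp (θ * Λ * (T + 1 : ℕ)) * f k := by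
            rw [← mul_assoc, ← Real.exp_add]
            congr 2
            push_cast
            ring
    have htot : HasSum (fun q : (Fin (T + 1) → X) × X =>
        (μ {ω | ∀ i : Fin (T + 1), Xp i ω = q.1 i}).toReal * P (q.1 (Fin.last T)) q.2 *
          (Real.exp (θ * (∑ i : Fin T, r (q.1 i.castSucc) + r (q.1 (Fin.last T)))) * f q.2))
        (Real.exp (θ * Λ * (T + 1 : ℕ)) * f k) := htsum ▸ hsumF.hasSum
    -- transfer along the snoc equivalence
    let e : ((Fin (T + 1) → X) × X) ≃ (Fin (T + 1 + 1) → X) :=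
      { toFun := fun q => Fin.snoc q.1 q.2
        invFun := fun q => (Fin.init q, q (Fin.last (T + 1)))
        left_inv := fun q => by simp
        right_inv := fun q => by simp [Fin.snoc_init_self] }
    refine e.hasSum_iff.mp ?_
    have hcomp : ((fun p : Fin (T + 1 + 1) → X =>
        (μ {ω | ∀ i : Fin (T + 1 + 1), Xp i ω = p i}).toReal *
          (Real.exp (θ * ∑ i : Fin (T + 1), r (p i.castSucc)) * f (p (Fin.last (T + 1))))) ∘ e)
        = fun q : (Fin (T + 1) → X) × X =>
          (μ {ω | ∀ i : Fin (T + 1), Xp i ω = q.1 i}).toReal * P (q.1 (Fin.last T)) q.2 *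
            (Real.exp (θ * (∑ i : Fin T, r (q.1 i.castSucc) + r (q.1 (Fin.last T)))) * f q.2) := by
      funext q
      obtain ⟨p, y⟩ := q
      show (μ {ω | ∀ i : Fin (T + 1 + 1), Xp i ω = (Fin.snoc p y : Fin (T+1+1) → X) i}).toReal *
          (Real.exp (θ * ∑ i : Fin (T + 1), r ((Fin.snoc p y : Fin (T+1+1) → X) i.castSucc)) *
            f ((Fin.snoc p y : Fin (T+1+1) → X) (Fin.last (T + 1)))) = _
      simp only [Fin.snoc_castSucc, Fin.snoc_last]
      rw [hA p y, Fin.sum_univ_castSucc]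
    rw [hcomp]
    exact htot

/-- A probability vector on a countable state space. -/
def IsProbVec {X : Type*} (p : X → ℝ) : Prop := (∀ j, 0 ≤ p j) ∧ HasSum p 1

/-- A Markov kernel on a countable state space. -/
def IsMarkovKer {X : Type*} (P : X → X → ℝ) : Prop := ∀ i, IsProbVec (P i)

/-- The process `Xp` is a Markov chain with kernel `P` under `μ`. -/
def IsMarkovChain {Ω X : Type*} [MeasurableSpace Ω] (μ : Measure Ω)
    (Xp : ℕ → Ω → X) (P : X → X → ℝ) : Prop :=
  ∀ (t : ℕ) (path : Fin (t + 1) → X) (y : X),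
    (μ {ω | (∀ i : Fin (t + 1), Xp i ω = path i) ∧ Xp (t + 1) ω = y}).toReal =
      (μ {ω | ∀ i : Fin (t + 1), Xp i ω = path i}).toReal * P (path (Fin.last t)) y

/-- The risk-sensitive ergodic cost equals the eigenvalue `Λ` of the multiplicative
Poisson (Bellman) equation (cf. Di Masi–Stettner Prop. 1.1 / Theorem
`relvalfnrepmpeuniq`): if `f > 0` is bounded above and below away from 0 and
`∑_j e^{θr(k)} f(j)P(j|k) = e^{θΛ} f(k)` for all `k`, then
`limsup_T (1/(θT)) log E_k[exp(θ∑_{t<T} r(X_t))] = Λ` for every starting state. -/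
theorem stmt13 {Ω X : Type*} [MeasurableSpace Ω]
    [MeasurableSpace X] [MeasurableSingletonClass X] [Countable X]
    (μ : Measure Ω) [IsProbabilityMeasure μ]
    (P : X → X → ℝ) (hP : IsMarkovKer P)
    (r : X → ℝ) (hrbdd : ∃ M : ℝ, ∀ k, |r k| ≤ M)
    (θ : ℝ) (hθ : 0 < θ) (Λ : ℝ)
    (f : X → ℝ) (hfpos : ∀ k, 0 < f k)
    (hfbdd : ∃ C : ℝ, ∀ k, f k ≤ C) (hfbelow : ∃ c : ℝ, 0 < c ∧ ∀ k, c ≤ f k)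
    (heq : ∀ k, HasSum (fun j => Real.exp (θ * r k) * f j * P k j)
      (Real.exp (θ * Λ) * f k))
    (Xp : ℕ → Ω → X) (hXmeas : ∀ t, Measurable (Xp t))
    (k : X) (hstart : ∀ ω, Xp 0 ω = k)
    (hchain : IsMarkovChain μ Xp P) :
    Filter.limsup
        (fun T : ℕ => 1 / (θ * T) *
          Real.log (∫ ω, Real.exp (θ * ∑ t ∈ Finset.range T, r (Xp t ω)) ∂μ))
        Filter.atTop = Λ := by
  obtain ⟨M, hM⟩ := hrbdd
  obtain ⟨C, hC⟩ := hfbdd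
  obtain ⟨c, hcpos, hcf⟩ := hfbelow
  have hfk : 0 < f k := hfpos k
  have hCpos : 0 < C := hcpos.trans_le ((hcf k).trans (hC k))
  -- measurability and integrability
  have hmeasS : ∀ T : ℕ, Measurable fun ω =>
      Real.exp (θ * ∑ t ∈ Finset.range T, r (Xp t ω)) := fun T =>
    Real.measurable_exp.comp (measurable_const.mul
      (Finset.measurable_sum _ fun t _ => (measurable_of_countable r).comp (hXmeas t)))
  have hsum_le : ∀ (T : ℕ) (ω : Ω), θ * ∑ t ∈ Finset.range T, r (Xp t ω) ≤ θ * (T * M) := by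
    intro T ω
    refine mul_le_mul_of_nonneg_left ?_ hθ.le
    calc ∑ t ∈ Finset.range T, r (Xp t ω) ≤ ∑ _t ∈ Finset.range T, M :=
          Finset.sum_le_sum fun t _ => (abs_le.1 (hM _)).2
      _ = T * M := by simp [Finset.sum_const, Finset.card_range, nsmul_eq_mul]
  have hIint : ∀ T : ℕ, Integrable
      (fun ω => Real.exp (θ * ∑ t ∈ Finset.range T, r (Xp t ω))) μ := by
    intro T
    refine (integrable_const (Real.exp (θ * (T * M)))).mono'
      (hmeasS T).aestronglyMeasurable (Filter.Eventually.of_forall fun ω => ?_)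
    rw [Real.norm_eq_abs, abs_of_pos (Real.exp_pos _)]
    exact Real.exp_le_exp.2 (hsum_le T ω)
  have hJint : ∀ T : ℕ, Integrable
      (fun ω => Real.exp (θ * ∑ t ∈ Finset.range T, r (Xp t ω)) * f (Xp T ω)) μ := by
    intro T
    refine (integrable_const (Real.exp (θ * (T * M)) * C)).mono'
      (((hmeasS T).mul ((measurable_of_countable f).comp (hXmeas T))).aestronglyMeasurable)
      (Filter.Eventually.of_forall fun ω => ?_)
    rw [Real.norm_eq_abs, abs_mul, abs_of_pos (Real.exp_pos _), abs_of_pos (hfpos _)]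
    exact mul_le_mul (Real.exp_le_exp.2 (hsum_le T ω)) (hC _) (hfpos _).le (Real.exp_pos _).le
  -- the exact value of the f-weighted expectation
  have hJ : ∀ T : ℕ, (∫ ω, Real.exp (θ * ∑ t ∈ Finset.range T, r (Xp t ω)) * f (Xp T ω) ∂μ)
      = Real.exp (θ * Λ * T) * f k := by
    intro T
    have hGb : ∀ p : Fin (T + 1) → X,
        |Real.exp (θ * ∑ i : Fin T, r (p i.castSucc)) * f (p (Fin.last T))|
          ≤ Real.exp (θ * (T * M)) * C := by
      intro p
      rw [abs_mul, abs_of_pos (Real.exp_pos _), abs_of_pos (hfpos _)]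
      refine mul_le_mul ?_ (hC _) (hfpos _).le (Real.exp_pos _).le
      refine Real.exp_le_exp.2 (mul_le_mul_of_nonneg_left ?_ hθ.le)
      calc ∑ i : Fin T, r (p i.castSucc) ≤ ∑ _i : Fin T, M :=
            Finset.sum_le_sum fun i _ => (abs_le.1 (hM _)).2
        _ = T * M := by simp [Finset.sum_const, nsmul_eq_mul]
    have h1 := integral_path_eq_tsum' μ Xp hXmeas (T + 1)
      (fun p => Real.exp (θ * ∑ i : Fin T, r (p i.castSucc)) * f (p (Fin.last T))) _ hGb
    have h2 : (fun ω => Real.exp (θ * ∑ t ∈ Finset.range T, r (Xp t ω)) * f (Xp T ω))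
        = fun ω => (fun p : Fin (T + 1) → X =>
            Real.exp (θ * ∑ i : Fin T, r (p i.castSucc)) * f (p (Fin.last T)))
          (fun i => Xp i ω) := by
      funext ω
      show _ = Real.exp (θ * ∑ i : Fin T, r (Xp (i.castSucc : Fin (T + 1)) ω)) *
        f (Xp ((Fin.last T : Fin (T + 1)) : ℕ) ω)
      simp only [Fin.coe_castSucc, Fin.val_last]
      rw [Fin.sum_univ_eq_sum_range (fun t => r (Xp t ω)) T]
    show (∫ ω, (fun ω => Real.exp (θ * ∑ t ∈ Finset.range T, r (Xp t ω)) * f (Xp T ω)) ω ∂μ)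
      = Real.exp (θ * Λ * T) * f k
    rw [h2]
    exact h1.trans (key_hasSum' μ P hP r θ Λ f hfpos heq Xp k hstart hchain T).tsum_eq
  -- sandwich the plain expectation
  have hlow : ∀ T : ℕ, Real.exp (θ * Λ * T) * f k ≤
      (∫ ω, Real.exp (θ * ∑ t ∈ Finset.range T, r (Xp t ω)) ∂μ) * C := by
    intro T
    rw [← hJ T]
    have h := integral_mono (hJint T) ((hIint T).mul_const C)
      (fun ω => mul_le_mul_of_nonneg_left (hC _) (Real.exp_pos _).le)
    rwa [integral_mul_const] at h
  have hup : ∀ T : ℕ, (∫ ω, Real.exp (θ * ∑ t ∈ Finset.range T, r (Xp t ω)) ∂μ) * c ≤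
      Real.exp (θ * Λ * T) * f k := by
    intro T
    rw [← hJ T]
    have h := integral_mono ((hIint T).mul_const c) (hJint T)
      (fun ω => mul_le_mul_of_nonneg_left (hcf _) (Real.exp_pos _).le)
    rwa [integral_mul_const] at h
  have hIpos : ∀ T : ℕ, 0 < ∫ ω, Real.exp (θ * ∑ t ∈ Finset.range T, r (Xp t ω)) ∂μ := by
    intro T
    nlinarith [hlow T, mul_pos (Real.exp_pos (θ * Λ * (T : ℕ))) hfk, hCpos]
  have hlogub : ∀ T : ℕ,
      Real.log (∫ ω, Real.exp (θ * ∑ t ∈ Finset.range T, r (Xp t ω)) ∂μ)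
        ≤ θ * Λ * T + Real.log (f k / c) := by
    intro T
    have h2 : (∫ ω, Real.exp (θ * ∑ t ∈ Finset.range T, r (Xp t ω)) ∂μ)
        ≤ Real.exp (θ * Λ * T) * (f k / c) := by
      have h3 := (le_div_iff₀ hcpos).2 (hup T)
      rwa [mul_div_assoc] at h3
    calc Real.log (∫ ω, Real.exp (θ * ∑ t ∈ Finset.range T, r (Xp t ω)) ∂μ)
        ≤ Real.log (Real.exp (θ * Λ * T) * (f k / c)) := Real.log_le_log (hIpos T) h2
      _ = θ * Λ * T + Real.log (f k / c) := by
          rw [Real.log_mul (Real.exp_ne_zero _) (div_pos hfk hcpos).ne', Real.log_exp]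
  have hloglb : ∀ T : ℕ,
      θ * Λ * T + Real.log (f k / C) ≤
        Real.log (∫ ω, Real.exp (θ * ∑ t ∈ Finset.range T, r (Xp t ω)) ∂μ) := by
    intro T
    have h2 : Real.exp (θ * Λ * T) * (f k / C)
        ≤ ∫ ω, Real.exp (θ * ∑ t ∈ Finset.range T, r (Xp t ω)) ∂μ := by
      have h3 := (div_le_iff₀ hCpos).2 (hlow T)
      rwa [mul_div_assoc] at h3
    calc θ * Λ * T + Real.log (f k / C)
        = Real.log (Real.exp (θ * Λ * T) * (f k / C)) := by
          rw [Real.log_mul (Real.exp_ne_zero _) (div_pos hfk hCpos).ne', Real.log_exp]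
      _ ≤ Real.log (∫ ω, Real.exp (θ * ∑ t ∈ Finset.range T, r (Xp t ω)) ∂μ) :=
          Real.log_le_log (mul_pos (Real.exp_pos _) (div_pos hfk hCpos)) h2
  -- pass to the limit
  have htheta0 : Tendsto (fun T : ℕ => 1 / (θ * T)) atTop (𝓝 0) := by
    have h1 : Tendsto (fun T : ℕ => θ * (T : ℝ)) atTop atTop :=
      tendsto_natCast_atTop_atTop.const_mul_atTop hθ
    simpa only [one_div, Pi.inv_def] using h1.inv_tendsto_atTop
  have hg : Tendsto (fun T : ℕ => Λ + Real.log (f k / C) * (1 / (θ * T))) atTop (𝓝 Λ) := by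
    have h1 := htheta0.const_mul (Real.log (f k / C))
    simpa using tendsto_const_nhds.add h1
  have hh : Tendsto (fun T : ℕ => Λ + Real.log (f k / c) * (1 / (θ * T))) atTop (𝓝 Λ) := by
    have h1 := htheta0.const_mul (Real.log (f k / c))
    simpa using tendsto_const_nhds.add h1
  have hmain : Tendsto (fun T : ℕ => 1 / (θ * T) *
      Real.log (∫ ω, Real.exp (θ * ∑ t ∈ Finset.range T, r (Xp t ω)) ∂μ)) atTop (𝓝 Λ) := by
    refine tendsto_of_tendsto_of_tendsto_of_le_of_le' hg hh ?_ ?_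
    · filter_upwards [eventually_ge_atTop 1] with T hT
      have hTpos : (0 : ℝ) < T := by exact_mod_cast hT
      have hT0 : (0 : ℝ) < θ * T := mul_pos hθ hTpos
      have e1 : Λ + Real.log (f k / C) * (1 / (θ * T))
          = (θ * Λ * T + Real.log (f k / C)) * (1 / (θ * T)) := by
        field_simp
      rw [e1, mul_comm (1 / (θ * (T : ℝ)))]
      exact mul_le_mul_of_nonneg_right (hloglb T) (by positivity)
    · filter_upwards [eventually_ge_atTop 1] with T hT
      have hTpos : (0 : ℝ) < T := by exact_mod_cast hT
      have hT0 : (0 : ℝ) < θ * T := mul_pos hθ hTpos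
      have e1 : Λ + Real.log (f k / c) * (1 / (θ * T))
          = (θ * Λ * T + Real.log (f k / c)) * (1 / (θ * T)) := by
        field_simp
      rw [e1, mul_comm (1 / (θ * (T : ℝ)))]
      exact mul_le_mul_of_nonneg_right (hlogub T) (by positivity)
  exact hmain.limsup_eq
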